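/- In the 6-dimensional complex Zinbiel algebra Z with basis e_1,...,e_6 and nonzero products e_1² = e_5 − e_6, [e_1,e_2] = e_4 + e_5 − e_6 = [e_3,e_2], [e_1,e_3] = e_2 = [e_1,e_5] = [e_1,e_6] = −[e_3,e_1], [e_5,e_2] = e_4 = [e_6,e_2], [e_5,e_1] = −e_2 + 2e_4 = [e_6,e_1], the subspace span{e_3, e_4, e_5, e_6} is an abelian subalgebra of dimension 4, but Z has no abelian ideal of dimension 4 (so α(Z) = 4 > β(Z) = 3). -/

import Mathlib

/-- Standard basis vectors of `ℂ⁶` (0-indexed: `e 0` is `e₁`, ..., `e 5` is `e₆`). -/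
noncomputable def e (i : Fin 6) : Fin 6 → ℂ := Pi.single i 1

/-- Multiplication table: `T i j = [e_{i+1}, e_{j+1}]` (0-indexed). -/
noncomputable def T : Fin 6 → Fin 6 → (Fin 6 → ℂ) :=
  ![![e 4 - e 5, e 3 + e 4 - e 5, e 1, 0, e 1, e 1],
    ![0, 0, 0, 0, 0, 0],
    ![-e 1, e 3 + e 4 - e 5, 0, 0, 0, 0],
    ![0, 0, 0, 0, 0, 0],
    ![-e 1 + (2 : ℂ) • e 3, e 3, 0, 0, 0, 0],
    ![-e 1 + (2 : ℂ) • e 3, e 3, 0, 0, 0, 0]]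

/-- `A` is a subalgebra. -/
def IsSubalg {F : Type*} [Field F] {Z : Type*} [AddCommGroup Z] [Module F Z]
    (b : Z →ₗ[F] Z →ₗ[F] Z) (A : Submodule F Z) : Prop :=
  ∀ x ∈ A, ∀ y ∈ A, b x y ∈ A

/-- `A` is abelian. -/
def IsAbelian {F : Type*} [Field F] {Z : Type*} [AddCommGroup Z] [Module F Z]
    (b : Z →ₗ[F] Z →ₗ[F] Z) (A : Submodule F Z) : Prop :=
  ∀ x ∈ A, ∀ y ∈ A, b x y = 0

/-- `A` is a two-sided ideal. -/
def IsIdeal {F : Type*} [Field F] {Z : Type*} [AddCommGroup Z] [Module F Z]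
    (b : Z →ₗ[F] Z →ₗ[F] Z) (A : Submodule F Z) : Prop :=
  ∀ z : Z, ∀ x ∈ A, b z x ∈ A ∧ b x z ∈ A

set_option linter.unnecessarySeqFocus false

lemma basis_expand (z : Fin 6 → ℂ) : z = ∑ i, z i • e i := by
  funext k
  simp [e, Finset.sum_apply, Pi.single_apply]

set_option maxHeartbeats 1000000 in
lemma key (b : (Fin 6 → ℂ) →ₗ[ℂ] (Fin 6 → ℂ) →ₗ[ℂ] (Fin 6 → ℂ))
    (htable : ∀ i j : Fin 6, b (e i) (e j) = T i j) (x y : Fin 6 → ℂ) :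
    b x y = (x 0 * (y 2 + y 4 + y 5) - (x 2 + x 4 + x 5) * y 0) • e 1
      + ((x 0 + x 2 + x 4 + x 5) * y 1 + 2 * (x 4 + x 5) * y 0) • e 3
      + (x 0 * y 0 + x 0 * y 1 + x 2 * y 1) • (e 4 - e 5) := by
  conv_lhs => rw [basis_expand x, basis_expand y]
  simp only [map_sum, map_smul, LinearMap.sum_apply, LinearMap.smul_apply, htable]
  simp only [Fin.sum_univ_six, show T 0 0 = e 4 - e 5 from rfl, show T 0 1 = e 3 + e 4 - e 5 from rfl, show T 0 2 = e 1 from rfl, show T 0 3 = (0 : Fin 6 → ℂ) from rfl, show T 0 4 = e 1 from rfl, show T 0 5 = e 1 from rfl, show T 1 0 = (0 : Fin 6 → ℂ) from rfl, show T 1 1 = (0 : Fin 6 → ℂ) from rfl, show T 1 2 = (0 : Fin 6 → ℂ) from rfl, show T 1 3 = (0 : Fin 6 → ℂ) from rfl, show T 1 4 = (0 : Fin 6 → ℂ) from rfl, show T 1 5 = (0 : Fin 6 → ℂ) from rfl, show T 2 0 = -e 1 from rfl, show T 2 1 = e 3 + e 4 - e 5 from rfl, show T 2 2 = (0 : Fin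 6 → ℂ) from rfl, show T 2 3 = (0 : Fin 6 → ℂ) from rfl, show T 2 4 = (0 : Fin 6 → ℂ) from rfl, show T 2 5 = (0 : Fin 6 → ℂ) from rfl, show T 3 0 = (0 : Fin 6 → ℂ) from rfl, show T 3 1 = (0 : Fin 6 → ℂ) from rfl, show T 3 2 = (0 : Fin 6 → ℂ) from rfl, show T 3 3 = (0 : Fin 6 → ℂ) from rfl, show T 3 4 = (0 : Fin 6 → ℂ) from rfl, show T 3 5 = (0 : Fin 6 → ℂ) from rfl, show T 4 0 = -e 1 + (2 : ℂ) • e 3 from rfl, show T 4 1 = e 3 from rfl, show T 4 2 = (0 : Fin 6 → ℂ) from rfl, show T 4 3 = (0 : Fin 6 → ℂ) from rfl, show T 4 4 = (0 : Fin 6 → ℂ) from rfl, show T 4 5 = (0 : Fin 6 → ℂ) from rfl, show T 5 0 = -e 1 + (2 : ℂ) • e 3 from rfl, show T 5 1 = e 3 from rfl, show T 5 2 = (0 : Fin 6 → ℂ) from rfl, show T 5 3 = (0 : Fin 6 → ℂ) from rfl, show T 5 4 = (0 : Fin 6 → ℂ) from rfl, show T 5 5 = (0 : Fin 6 → ℂ)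 from rfl]
  funext k
  fin_cases k <;> simp [e, Pi.single_apply] <;> ring

variable {b : (Fin 6 → ℂ) →ₗ[ℂ] (Fin 6 → ℂ) →ₗ[ℂ] (Fin 6 → ℂ)}

lemma c0eq (htable : ∀ i j : Fin 6, b (e i) (e j) = T i j) (x y : Fin 6 → ℂ) :
    (b x y) 0 = 0 := by
  rw [key b htable]; simp [e, Pi.single_apply]

lemma c1eq (htable : ∀ i j : Fin 6, b (e i) (e j) = T i j) (x y : Fin 6 → ℂ) :
    (b x y) 1 = x 0 * (y 2 + y 4 + y 5) - (x 2 + x 4 + x 5) * y 0 := by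
  rw [key b htable]; simp [e, Pi.single_apply]

lemma c3eq (htable : ∀ i j : Fin 6, b (e i) (e j) = T i j) (x y : Fin 6 → ℂ) :
    (b x y) 3 = (x 0 + x 2 + x 4 + x 5) * y 1 + 2 * (x 4 + x 5) * y 0 := by
  rw [key b htable]; simp [e, Pi.single_apply]

lemma c4eq (htable : ∀ i j : Fin 6, b (e i) (e j) = T i j) (x y : Fin 6 → ℂ) :
    (b x y) 4 = x 0 * y 0 + x 0 * y 1 + x 2 * y 1 := by
  rw [key b htable]; simp [e, Pi.single_apply]

lemma li3 : LinearIndependent ℂ ![e 1, e 3, e 4 - e 5] := by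
  rw [Fintype.linearIndependent_iff]
  intro g hg i
  have h1 := congrFun hg 1
  have h3 := congrFun hg 3
  have h4 := congrFun hg 4
  simp [Fin.sum_univ_three, e, Pi.single_apply, Matrix.vecHead, Matrix.vecTail] at h1 h3 h4
  fin_cases i
  exacts [h1, h3, h4]

lemma li4 : LinearIndependent ℂ ![e 2, e 3, e 4, e 5] := by
  rw [Fintype.linearIndependent_iff]
  intro g hg i
  have h2 := congrFun hg 2
  have h3 := congrFun hg 3
  have h4 := congrFun hg 4
  have h5 := congrFun hg 5
  simp [Fin.sum_univ_four, e, Pi.single_apply, Matrix.vecHead, Matrix.vecTail] at h2 h3 h4 h5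
  fin_cases i
  exacts [h2, h3, h4, h5]

lemma range3 (v1 v2 v3 : Fin 6 → ℂ) :
    Set.range ![v1, v2, v3] = {v1, v2, v3} := by
  ext w
  constructor
  · rintro ⟨i, rfl⟩; fin_cases i <;> simp
  · rintro (rfl | rfl | rfl)
    exacts [⟨0, rfl⟩, ⟨1, rfl⟩, ⟨2, rfl⟩]

lemma range4 (v1 v2 v3 v4 : Fin 6 → ℂ) :
    Set.range ![v1, v2, v3, v4] = {v1, v2, v3, v4} := by
  ext w
  constructor
  · rintro ⟨i, rfl⟩; fin_cases i <;> simp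
  · rintro (rfl | rfl | rfl | rfl)
    exacts [⟨0, rfl⟩, ⟨1, rfl⟩, ⟨2, rfl⟩, ⟨3, rfl⟩]

lemma rank_le_of_range (n : ℕ) (f : Fin n → (Fin 6 → ℂ)) (S : Submodule ℂ (Fin 6 → ℂ))
    (hle : S ≤ Submodule.span ℂ (Set.range f)) : Module.finrank ℂ S ≤ n := by
  refine (Submodule.finrank_mono hle).trans ?_
  have h := finrank_range_le_card (R := ℂ) f
  simpa [Set.finrank] using h

/-- in the 6-dimensional complex Zinbiel algebra with the above table,
`span{e₃,e₄,e₅,e₆}` is a 4-dimensional abelian subalgebra, every abelian subalgebra has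
dimension at most 4, but every abelian ideal has dimension at most 3, and some abelian
ideal has dimension 3; hence `α(Z) = 4 > β(Z) = 3`. -/
theorem stmt10 (b : (Fin 6 → ℂ) →ₗ[ℂ] (Fin 6 → ℂ) →ₗ[ℂ] (Fin 6 → ℂ))
    (htable : ∀ i j : Fin 6, b (e i) (e j) = T i j) :
    (IsSubalg b (Submodule.span ℂ {e 2, e 3, e 4, e 5}) ∧
     IsAbelian b (Submodule.span ℂ {e 2, e 3, e 4, e 5}) ∧
     Module.finrank ℂ (Submodule.span ℂ {e 2, e 3, e 4, e 5}) = 4) ∧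
    (∀ S : Submodule ℂ (Fin 6 → ℂ), IsSubalg b S → IsAbelian b S →
      Module.finrank ℂ S ≤ 4) ∧
    (∀ B : Submodule ℂ (Fin 6 → ℂ), IsIdeal b B → IsAbelian b B →
      Module.finrank ℂ B ≤ 3) ∧
    (∃ B : Submodule ℂ (Fin 6 → ℂ), IsIdeal b B ∧ IsAbelian b B ∧
      Module.finrank ℂ B = 3) := by
  -- the coordinate description of span {e2,e3,e4,e5}
  have hker4 : Submodule.span ℂ {e 2, e 3, e 4, e 5} ≤
      LinearMap.ker (LinearMap.proj (R := ℂ) (φ := fun _ : Fin 6 => ℂ) 0) ⊓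
      LinearMap.ker (LinearMap.proj (R := ℂ) (φ := fun _ : Fin 6 => ℂ) 1) := by
    rw [Submodule.span_le]
    intro v hv
    simp only [Set.mem_insert_iff, Set.mem_singleton_iff] at hv
    rcases hv with rfl | rfl | rfl | rfl <;>
      simp [Submodule.mem_inf, LinearMap.mem_ker, e, Pi.single_apply]
  have habel4 : IsAbelian b (Submodule.span ℂ {e 2, e 3, e 4, e 5}) := by
    intro x hx y hy
    obtain ⟨hx0, hx1⟩ := Submodule.mem_inf.mp (hker4 hx)
    obtain ⟨hy0, hy1⟩ := Submodule.mem_inf.mp (hker4 hy)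
    simp only [LinearMap.mem_ker, LinearMap.proj_apply] at hx0 hx1 hy0 hy1
    rw [key b htable, hx0, hy0, hy1]
    simp
  refine ⟨⟨fun x hx y hy => by rw [habel4 x hx y hy]; exact zero_mem _, habel4, ?_⟩, ?_, ?_, ?_⟩
  · -- finrank = 4
    rw [show ({e 2, e 3, e 4, e 5} : Set (Fin 6 → ℂ)) = Set.range ![e 2, e 3, e 4, e 5] from
      (range4 _ _ _ _).symm, finrank_span_eq_card li4]
    simp
  · -- every abelian subalgebra has finrank ≤ 4
    intro S _ habel
    by_cases hA : ∃ v ∈ S, v 0 ≠ 0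
    · obtain ⟨v, hvS, hv0⟩ := hA
      refine rank_le_of_range 4 ![v, e 1, e 3, e 4 - e 5] S ?_
      intro x hx
      set z := x - (x 0 / v 0) • v with hz
      have hzS : z ∈ S := S.sub_mem hx (S.smul_mem _ hvS)
      have hz0 : z 0 = 0 := by
        simp only [hz, Pi.sub_apply, Pi.smul_apply, smul_eq_mul]
        field_simp
        ring
      have e1vz : v 0 * (z 2 + z 4 + z 5) - (v 2 + v 4 + v 5) * z 0 = 0 := by
        rw [← c1eq htable v z, habel v hvS z hzS]; rfl
      have e3zv : (z 0 + z 2 + z 4 + z 5) * v 1 + 2 * (z 4 + z 5) * v 0 = 0 := by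
        rw [← c3eq htable z v, habel z hzS v hvS]; rfl
      have h245 : z 2 + z 4 + z 5 = 0 := by
        rcases mul_eq_zero.mp (show v 0 * (z 2 + z 4 + z 5) = 0 by
          linear_combination e1vz + (v 2 + v 4 + v 5) * hz0) with h | h
        · exact absurd h hv0
        · exact h
      have h45 : z 4 + z 5 = 0 := by
        rcases mul_eq_zero.mp (show (z 4 + z 5) * v 0 = 0 by
          linear_combination (1/2 : ℂ) * e3zv - (1/2 : ℂ) * v 1 * hz0
            - (1/2 : ℂ) * v 1 * h245) with h | h
        · exact h
        · exact absurd h hv0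
      have h2 : z 2 = 0 := by linear_combination h245 - h45
      have hzmem : z = z 1 • e 1 + z 3 • e 3 + z 4 • (e 4 - e 5) := by
        funext k
        fin_cases k <;> simp [e, Pi.single_apply, hz0, h2] <;> linear_combination h45
      have hxz : x = (x 0 / v 0) • v + z := by rw [hz]; abel
      rw [hxz, hzmem]
      have mem : ∀ i : Fin 4, ![v, e 1, e 3, e 4 - e 5] i ∈
          Submodule.span ℂ (Set.range ![v, e 1, e 3, e 4 - e 5]) :=
        fun i => Submodule.subset_span ⟨i, rfl⟩
      exact add_mem (Submodule.smul_mem _ _ (mem 0))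
        (add_mem (add_mem (Submodule.smul_mem _ _ (mem 1)) (Submodule.smul_mem _ _ (mem 2)))
          (Submodule.smul_mem _ _ (mem 3)))
    · push_neg at hA
      by_cases hB : ∃ v ∈ S, v 1 ≠ 0
      · obtain ⟨v, hvS, hv1⟩ := hB
        refine le_trans (rank_le_of_range 3 ![e 1, e 3, e 4 - e 5] S ?_) (by norm_num)
        intro x hx
        have hx0 : x 0 = 0 := hA x hx
        have hv0 : v 0 = 0 := hA v hvS
        have e4xv : x 0 * v 0 + x 0 * v 1 + x 2 * v 1 = 0 := by
          rw [← c4eq htable x v, habel x hx v hvS]; rfl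
        have e3xv : (x 0 + x 2 + x 4 + x 5) * v 1 + 2 * (x 4 + x 5) * v 0 = 0 := by
          rw [← c3eq htable x v, habel x hx v hvS]; rfl
        have hx2 : x 2 = 0 := by
          rcases mul_eq_zero.mp (show x 2 * v 1 = 0 by
            linear_combination e4xv - v 0 * hx0 - v 1 * hx0) with h | h
          · exact h
          · exact absurd h hv1
        have h45 : x 4 + x 5 = 0 := by
          rcases mul_eq_zero.mp (show (x 4 + x 5) * v 1 = 0 by
            linear_combination e3xv - v 1 * hx0 - v 1 * hx2 - 2 * (x 4 + x 5) * hv0)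
            with h | h
          · exact h
          · exact absurd h hv1
        have hxmem : x = x 1 • e 1 + x 3 • e 3 + x 4 • (e 4 - e 5) := by
          funext k
          fin_cases k <;> simp [e, Pi.single_apply, hx0, hx2] <;> linear_combination h45
        rw [hxmem]
        have mem : ∀ i : Fin 3, ![e 1, e 3, e 4 - e 5] i ∈
            Submodule.span ℂ (Set.range ![e 1, e 3, e 4 - e 5]) :=
          fun i => Submodule.subset_span ⟨i, rfl⟩
        exact add_mem (add_mem (Submodule.smul_mem _ _ (mem 0)) (Submodule.smul_mem _ _ (mem 1)))
          (Submodule.smul_mem _ _ (mem 2))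
      · push_neg at hB
        refine rank_le_of_range 4 ![e 2, e 3, e 4, e 5] S ?_
        intro x hx
        have hx0 : x 0 = 0 := hA x hx
        have hx1 : x 1 = 0 := hB x hx
        have hxmem : x = x 2 • e 2 + x 3 • e 3 + x 4 • e 4 + x 5 • e 5 := by
          funext k
          fin_cases k <;> simp [e, Pi.single_apply, hx0, hx1]
        rw [hxmem]
        have mem : ∀ i : Fin 4, ![e 2, e 3, e 4, e 5] i ∈
            Submodule.span ℂ (Set.range ![e 2, e 3, e 4, e 5]) :=
          fun i => Submodule.subset_span ⟨i, rfl⟩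
        exact add_mem (add_mem (add_mem (Submodule.smul_mem _ _ (mem 0))
          (Submodule.smul_mem _ _ (mem 1))) (Submodule.smul_mem _ _ (mem 2)))
          (Submodule.smul_mem _ _ (mem 3))
  · -- every abelian ideal has finrank ≤ 3
    intro S hid hab
    have h0 : ∀ x ∈ S, x 0 = 0 := by
      intro x hx
      have huS : b (e 4) x ∈ S := (hid (e 4) x hx).1
      have hu0 : (b (e 4) x) 0 = 0 := c0eq htable _ _
      have hu1 : (b (e 4) x) 1 = -(x 0) := by
        rw [c1eq htable]; simp [e, Pi.single_apply]
      have eq5 : x 0 * (b (e 4) x) 0 + x 0 * (b (e 4) x) 1 + x 2 * (b (e 4) x) 1 = 0 := by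
        rw [← c4eq htable x _, hab x hx _ huS]; rfl
      have eq2 : x 0 * x 0 + x 0 * x 1 + x 2 * x 1 = 0 := by
        rw [← c4eq htable x x, hab x hx x hx]; rfl
      rw [hu0, hu1] at eq5
      have hcube : x 0 ^ 3 = 0 := by linear_combination x 0 * eq2 + x 1 * eq5
      exact pow_eq_zero_iff (by norm_num) |>.mp hcube
    have hcw : ∀ x ∈ S, x 2 + x 4 + x 5 = 0 := by
      intro x hx
      have hyS : b (e 0) x ∈ S := (hid (e 0) x hx).1
      have hy0 : (b (e 0) x) 0 = 0 := c0eq htable _ _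
      have hy1 : (b (e 0) x) 1 = x 2 + x 4 + x 5 := by
        rw [c1eq htable]; simp [e, Pi.single_apply]; try ring
      have eq3 : (x 0 + x 2 + x 4 + x 5) * (b (e 0) x) 1
          + 2 * (x 4 + x 5) * (b (e 0) x) 0 = 0 := by
        rw [← c3eq htable x _, hab x hx _ hyS]; rfl
      rw [hy0, hy1] at eq3
      have hx0 := h0 x hx
      have hsq : (x 2 + x 4 + x 5) ^ 2 = 0 := by
        linear_combination eq3 - (x 2 + x 4 + x 5) * hx0
      exact pow_eq_zero_iff (by norm_num) |>.mp hsq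
    by_cases hB : ∃ v ∈ S, v 1 ≠ 0
    · obtain ⟨v, hvS, hv1⟩ := hB
      refine rank_le_of_range 3 ![e 1, e 3, e 4 - e 5] S ?_
      intro x hx
      have hx0 : x 0 = 0 := h0 x hx
      have e4xv : x 0 * v 0 + x 0 * v 1 + x 2 * v 1 = 0 := by
        rw [← c4eq htable x v, hab x hx v hvS]; rfl
      have hx2 : x 2 = 0 := by
        rcases mul_eq_zero.mp (show x 2 * v 1 = 0 by
          linear_combination e4xv - v 0 * hx0 - v 1 * hx0) with h | h
        · exact h
        · exact absurd h hv1
      have h45 : x 4 + x 5 = 0 := by linear_combination hcw x hx - hx2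
      have hxmem : x = x 1 • e 1 + x 3 • e 3 + x 4 • (e 4 - e 5) := by
        funext k
        fin_cases k <;> simp [e, Pi.single_apply, hx0, hx2] <;> linear_combination h45
      rw [hxmem]
      have mem : ∀ i : Fin 3, ![e 1, e 3, e 4 - e 5] i ∈
          Submodule.span ℂ (Set.range ![e 1, e 3, e 4 - e 5]) :=
        fun i => Submodule.subset_span ⟨i, rfl⟩
      exact add_mem (add_mem (Submodule.smul_mem _ _ (mem 0)) (Submodule.smul_mem _ _ (mem 1)))
        (Submodule.smul_mem _ _ (mem 2))
    · push_neg at hB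
      refine rank_le_of_range 3 ![e 3, e 4 - e 2, e 5 - e 2] S ?_
      intro x hx
      have hx0 : x 0 = 0 := h0 x hx
      have hx1 : x 1 = 0 := hB x hx
      have h245 : x 2 + x 4 + x 5 = 0 := hcw x hx
      have hxmem : x = x 3 • e 3 + x 4 • (e 4 - e 2) + x 5 • (e 5 - e 2) := by
        funext k
        fin_cases k <;> simp [e, Pi.single_apply, hx0, hx1] <;> linear_combination h245
      rw [hxmem]
      have mem : ∀ i : Fin 3, ![e 3, e 4 - e 2, e 5 - e 2] i ∈
          Submodule.span ℂ (Set.range ![e 3, e 4 - e 2, e 5 - e 2]) :=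
        fun i => Submodule.subset_span ⟨i, rfl⟩
      exact add_mem (add_mem (Submodule.smul_mem _ _ (mem 0)) (Submodule.smul_mem _ _ (mem 1)))
        (Submodule.smul_mem _ _ (mem 2))
  · -- an abelian ideal of dimension 3
    refine ⟨Submodule.span ℂ (Set.range ![e 1, e 3, e 4 - e 5]), ?_, ?_, ?_⟩
    · intro z x hx
      have mem : ∀ i : Fin 3, ![e 1, e 3, e 4 - e 5] i ∈
          Submodule.span ℂ (Set.range ![e 1, e 3, e 4 - e 5]) :=
        fun i => Submodule.subset_span ⟨i, rfl⟩
      constructor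
      all_goals
        rw [key b htable]
        exact add_mem (add_mem (Submodule.smul_mem _ _ (mem 0))
          (Submodule.smul_mem _ _ (mem 1))) (Submodule.smul_mem _ _ (mem 2))
    · have hco : Submodule.span ℂ (Set.range ![e 1, e 3, e 4 - e 5]) ≤
          LinearMap.ker (LinearMap.proj (R := ℂ) (φ := fun _ : Fin 6 => ℂ) 0) ⊓
          (LinearMap.ker (LinearMap.proj (R := ℂ) (φ := fun _ : Fin 6 => ℂ) 2) ⊓
           LinearMap.ker ((LinearMap.proj (R := ℂ) (φ := fun _ : Fin 6 => ℂ) 4) +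
             (LinearMap.proj (R := ℂ) (φ := fun _ : Fin 6 => ℂ) 5))) := by
        rw [Submodule.span_le]
        rintro v ⟨i, rfl⟩
        fin_cases i <;>
          simp [Submodule.mem_inf, LinearMap.mem_ker, e, Pi.single_apply]
      intro x hx y hy
      obtain ⟨hx0, hx2, hx45⟩ := Submodule.mem_inf.mp (hco hx) |>.imp id (Submodule.mem_inf.mp)
      obtain ⟨hy0, hy2, hy45⟩ := Submodule.mem_inf.mp (hco hy) |>.imp id (Submodule.mem_inf.mp)
      simp only [LinearMap.mem_ker, LinearMap.proj_apply, LinearMap.add_apply] at hx0 hx2 hx45 hy0 hy2 hy45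
      have hC1 : x 0 * (y 2 + y 4 + y 5) - (x 2 + x 4 + x 5) * y 0 = 0 := by
        linear_combination (y 2 + y 4 + y 5) * hx0 - y 0 * hx2 - y 0 * hx45
      have hC3 : (x 0 + x 2 + x 4 + x 5) * y 1 + 2 * (x 4 + x 5) * y 0 = 0 := by
        linear_combination y 1 * hx0 + y 1 * hx2 + y 1 * hx45 + 2 * (x 4 + x 5) * hy0
      have hC4 : x 0 * y 0 + x 0 * y 1 + x 2 * y 1 = 0 := by
        linear_combination (y 0 + y 1) * hx0 + y 1 * hx2
      rw [key b htable, hC1, hC3, hC4]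
      simp
    · rw [finrank_span_eq_card li3]
      simp
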